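/- Let R be a totally ordered idempotent semifield and let C ∈ M_n(R) with per C ≠ 0, where per C = Σ_{σ∈S_n} C_{1σ(1)}⋯C_{nσ(n)}. Then there exist vectors u, v ∈ (R∖{0})^n such that C_{ij} ≤ u_i·v_j for all i, j ∈ [n]; C_{iσ(i)} = u_i·v_{σ(i)} for every i ∈ [n] and every permutation σ with per C = Π_{i∈[n]} C_{iσ(i)}; and per C = Π_{i∈[n]} u_i · Π_{j∈[n]} v_j. -/

import Mathlib

open Finset

/-- The permanent of a matrix over a commutative semiring. -/
def perm {R : Type*} [CommSemiring R] {n : ℕ} (A : Matrix (Fin n) (Fin n) R) : R :=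
  ∑ σ : Equiv.Perm (Fin n), ∏ i, A i (σ i)

section OrderLemmas
variable {R : Type*} [CommSemiring R]

/-- transitivity of the natural order -/
theorem tle_trans {a b c : R} (h1 : a + b = b) (h2 : b + c = c) : a + c = c := by
  calc a + c = a + (b + c) := by rw [h2]
    _ = (a + b) + c := by rw [add_assoc]
    _ = c := by rw [h1, h2]

theorem tle_add_left (hidem : ∀ a : R, a + a = a) (a b : R) : a + (a + b) = a + b := by
  rw [← add_assoc, hidem]

theorem tle_add_right (hidem : ∀ a : R, a + a = a) (a b : R) : b + (a + b) = a + b := by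
  rw [add_comm a b, ← add_assoc, hidem]

theorem tle_mul_right {a b : R} (c : R) (h : a + b = b) : a * c + b * c = b * c := by
  rw [← add_mul, h]

theorem tle_mul_left {a b : R} (c : R) (h : a + b = b) : c * a + c * b = c * b := by
  rw [← mul_add, h]

theorem tle_antisymm {a b : R} (h1 : a + b = b) (h2 : b + a = a) : a = b := by
  rw [← h2, add_comm, h1]

theorem tle_sum {ι : Type*} {s : Finset ι} {f : ι → R} {c : R}
    (h : ∀ i ∈ s, f i + c = c) : (∑ i ∈ s, f i) + c = c := by
  classical
  induction s using Finset.induction_on with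
  | empty => simp
  | insert _ _ hx ih =>
    rename_i a s
    rw [Finset.sum_insert hx, add_assoc, ih (fun i hi => h i (Finset.mem_insert_of_mem hi)),
      h a (Finset.mem_insert_self a s)]

theorem tle_le_sum (hidem : ∀ a : R, a + a = a) {ι : Type*} {s : Finset ι} {f : ι → R}
    {a : ι} (ha : a ∈ s) : f a + ∑ i ∈ s, f i = ∑ i ∈ s, f i := by
  classical
  rw [← Finset.add_sum_erase s f ha, tle_add_left hidem]

theorem tle_exists_eq_sum (htot : ∀ a b : R, a + b = b ∨ a + b = a)
    {ι : Type*} {s : Finset ι} (hs : s.Nonempty) (f : ι → R) :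
    ∃ a ∈ s, ∑ i ∈ s, f i = f a := by
  classical
  induction hs using Finset.Nonempty.cons_induction with
  | singleton a => exact ⟨a, Finset.mem_singleton_self a, Finset.sum_singleton f a⟩
  | cons a s ha hs ih =>
    obtain ⟨b, hb, hsum⟩ := ih
    rw [Finset.sum_cons, hsum]
    rcases htot (f a) (f b) with h | h
    · exact ⟨b, Finset.mem_cons_of_mem hb, h⟩
    · exact ⟨a, Finset.mem_cons_self a s, h⟩

theorem tle_prod (hidem : ∀ a : R, a + a = a) {ι : Type*} {s : Finset ι} {f g : ι → R}
    (h : ∀ i ∈ s, f i + g i = g i) : (∏ i ∈ s, f i) + ∏ i ∈ s, g i = ∏ i ∈ s, g i := by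
  classical
  induction s using Finset.induction_on with
  | empty => simpa using hidem 1
  | insert _ _ hx ih =>
    rename_i a s
    rw [Finset.prod_insert hx, Finset.prod_insert hx]
    exact tle_trans (tle_mul_left _ (ih fun i hi => h i (Finset.mem_insert_of_mem hi)))
      (tle_mul_right _ (h a (Finset.mem_insert_self a s)))

theorem tle_cancel {a b : R} {c : R} (hc : IsUnit c) (h : a * c = b * c) : a = b := by
  obtain ⟨u, rfl⟩ := hc
  calc a = a * u * ↑u⁻¹ := by rw [mul_assoc, Units.mul_inv, mul_one]
    _ = b := by rw [h, mul_assoc, Units.mul_inv, mul_one]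

/-- if `f i ≤ g i` pointwise, products agree and `g` consists of units, then `f = g`. -/
theorem tle_prod_eq (hidem : ∀ a : R, a + a = a) {ι : Type*} {s : Finset ι} {f g : ι → R}
    (h : ∀ i ∈ s, f i + g i = g i) (hprod : ∏ i ∈ s, f i = ∏ i ∈ s, g i)
    (hg : ∀ i ∈ s, IsUnit (g i)) : ∀ a ∈ s, f a = g a := by
  classical
  intro a ha
  have hP : IsUnit (∏ i ∈ s.erase a, g i) :=
    Finset.prod_induction _ IsUnit (fun _ _ => IsUnit.mul) isUnit_one
      fun i hi => hg i (Finset.mem_of_mem_erase hi)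
  have h1 : (∏ i ∈ s, f i) + f a * ∏ i ∈ s.erase a, g i = f a * ∏ i ∈ s.erase a, g i := by
    rw [← Finset.mul_prod_erase s f ha]
    exact tle_mul_left _ (tle_prod hidem fun i hi => h i (Finset.mem_of_mem_erase hi))
  have h2 : f a * (∏ i ∈ s.erase a, g i) + ∏ i ∈ s, g i = ∏ i ∈ s, g i := by
    rw [← Finset.mul_prod_erase s g ha]
    exact tle_mul_right _ (h a ha)
  have key : f a * ∏ i ∈ s.erase a, g i = g a * ∏ i ∈ s.erase a, g i := by
    rw [Finset.mul_prod_erase s g ha]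
    refine tle_antisymm h2 ?_
    rw [← hprod]; exact h1
  exact tle_cancel hP key

end OrderLemmas

/-- weight of the walk `q 0, q 1, ..., q m` -/
def wW {R : Type*} [CommSemiring R] {n : ℕ} (A : Matrix (Fin n) (Fin n) R)
    (q : ℕ → Fin n) (m : ℕ) : R :=
  ∏ t ∈ Finset.range m, A (q t) (q (t + 1))

section Walks
variable {R : Type*} [CommSemiring R] {n : ℕ} (A : Matrix (Fin n) (Fin n) R)

theorem wW_congr {q q' : ℕ → Fin n} {m : ℕ} (h : ∀ t ≤ m, q t = q' t) :
    wW A q m = wW A q' m := by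
  unfold wW
  refine Finset.prod_congr rfl fun t ht => ?_
  rw [Finset.mem_range] at ht
  rw [h t (le_of_lt ht), h (t + 1) ht]

/-- splitting off a closed subwalk from position `a` to position `b` -/
theorem wW_split (q : ℕ → Fin n) {a b m : ℕ} (hab : a < b) (hbm : b ≤ m)
    (hq : q a = q b) :
    wW A q m = wW A (fun u => if u < a then q u else q (u + (b - a))) (m - (b - a)) *
      wW A (fun v => q (v + a)) (b - a) := by
  set δ := b - a with hδ
  set m' := m - δ with hm'
  set g : ℕ → Fin n := fun u => if u < a then q u else q (u + δ) with hg
  have ham' : a ≤ m' := by omega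
  have hga : ∀ u ≤ a, g u = q u := by
    intro u hu
    rcases lt_or_eq_of_le hu with h | h
    · simp [hg, h]
    · subst h
      have : ¬ (u < u) := lt_irrefl u
      simp only [hg, this, if_false]
      have : u + δ = b := by omega
      rw [this, ← hq]
  have split3 : wW A q m =
      ((∏ u ∈ Finset.range a, A (q u) (q (u+1))) * ∏ u ∈ Finset.Ico b m, A (q u) (q (u+1))) *
        ∏ u ∈ Finset.Ico a b, A (q u) (q (u+1)) := by
    unfold wW
    rw [Finset.range_eq_Ico, ← Finset.prod_Ico_consecutive _ (Nat.zero_le a) (le_of_lt (lt_of_lt_of_le hab hbm)),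
      ← Finset.prod_Ico_consecutive _ (le_of_lt hab) hbm, ← Finset.range_eq_Ico]
    ring
  have part1 : wW A g m' = (∏ u ∈ Finset.range a, A (q u) (q (u+1))) *
      ∏ u ∈ Finset.Ico b m, A (q u) (q (u+1)) := by
    unfold wW
    rw [Finset.range_eq_Ico, ← Finset.prod_Ico_consecutive _ (Nat.zero_le a) ham',
      ← Finset.range_eq_Ico]
    congr 1
    · refine Finset.prod_congr rfl fun u hu => ?_
      rw [Finset.mem_range] at hu
      rw [hga u (le_of_lt hu), hga (u+1) hu]
    · rw [Finset.prod_Ico_eq_prod_range, Finset.prod_Ico_eq_prod_range]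
      have hlen : m' - a = m - b := by omega
      rw [hlen]
      refine Finset.prod_congr rfl fun v _ => ?_
      have h1 : ¬ (a + v < a) := by omega
      have h2 : ¬ (a + v + 1 < a) := by omega
      simp only [hg, h1, h2, if_false]
      congr 2 <;> omega
  have part2 : wW A (fun v => q (v + a)) δ = ∏ u ∈ Finset.Ico a b, A (q u) (q (u+1)) := by
    unfold wW
    rw [Finset.prod_Ico_eq_prod_range]
    have : b - a = δ := rfl
    rw [this]
    refine Finset.prod_congr rfl fun v _ => ?_
    show A (q (v + a)) (q (v + 1 + a)) = A (q (a + v)) (q (a + v + 1))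
    rw [show v + a = a + v from Nat.add_comm _ _, show v + 1 + a = a + v + 1 by omega]
  rw [split3, part1, part2]

/-- padding a walk of length `m'` by repeating the endpoint, when `A` has unit diagonal -/
theorem wW_pad (hdiag : ∀ c, A c c = 1) (q : ℕ → Fin n) {m' m : ℕ} (h : m' ≤ m) :
    wW A (fun u => q (min u m')) m = wW A q m' := by
  unfold wW
  rw [Finset.range_eq_Ico, ← Finset.prod_Ico_consecutive _ (Nat.zero_le m') h,
    ← Finset.range_eq_Ico]
  have h2 : ∏ u ∈ Finset.Ico m' m, A (q (min u m')) (q (min (u+1) m')) = 1 := by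
    refine Finset.prod_eq_one fun u hu => ?_
    rw [Finset.mem_Ico] at hu
    rw [min_eq_right hu.1, min_eq_right (le_trans hu.1 (Nat.le_succ u)), hdiag]
  rw [h2, mul_one]
  refine Finset.prod_congr rfl fun u hu => ?_
  rw [Finset.mem_range] at hu
  show A (q (min u m')) (q (min (u + 1) m')) = A (q u) (q (u + 1))
  rw [min_eq_left (le_of_lt hu), min_eq_left hu]

end Walks

section Cycles
variable {R : Type*} [CommSemiring R] {n : ℕ}

/-- a simple closed walk (injective on `[0,m)`) has weight `≤ 1` -/
theorem cycle_le_one (A : Matrix (Fin n) (Fin n) R)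
    (hdiag : ∀ c, A c c = 1)
    (hAone : ∀ σ : Equiv.Perm (Fin n), (∏ i, A i (σ i)) + 1 = 1)
    (m : ℕ) (q : ℕ → Fin n) (hq : q m = q 0)
    (hinj : ∀ k l : Fin m, q (k : ℕ) = q (l : ℕ) → k = l) :
    wW A q m + 1 = 1 := by
  classical
  set f : Fin m → Fin n := fun k => q (k : ℕ) with hf
  have hfinj : Function.Injective f := fun k l h => hinj k l h
  set l : List (Fin n) := List.ofFn f with hl
  have hlen : l.length = m := List.length_ofFn
  have hnd : l.Nodup := List.nodup_ofFn.mpr hfinj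
  set σ : Equiv.Perm (Fin n) := l.formPerm with hσ
  have hmem : ∀ x : Fin n, x ∈ l ↔ ∃ k : Fin m, f k = x := by
    intro x; rw [List.mem_ofFn]
  have key : ∀ k : Fin m, σ (f k) = q ((k : ℕ) + 1) := by
    intro k
    have hk : (k : ℕ) < l.length := by rw [hlen]; exact k.2
    have h1 : f k = l[(k : ℕ)] := by simp [hl, List.getElem_ofFn]
    rw [h1, hσ, List.formPerm_apply_getElem l hnd k hk]
    have h2 : l[((k : ℕ) + 1) % l.length]'(Nat.mod_lt _ (by omega)) =
        q (((k : ℕ) + 1) % m) := by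
      simp only [hlen]
      simp [hl, List.getElem_ofFn]
      rfl
    rw [h2]
    rcases Nat.lt_or_ge ((k : ℕ) + 1) m with h | h
    · rw [Nat.mod_eq_of_lt h]
    · have hm : (k : ℕ) + 1 = m := by omega
      rw [hm, Nat.mod_self, hq]
  have hout : ∀ x : Fin n, x ∉ l → σ x = x := fun x hx =>
    List.formPerm_apply_of_notMem hx
  have hprod : (∏ i, A i (σ i)) = wW A q m := by
    have h1 : (∏ i, A i (σ i)) = ∏ i ∈ Finset.image f Finset.univ, A i (σ i) := by
      refine (Finset.prod_subset (Finset.subset_univ _) fun x _ hx => ?_).symm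
      have hxl : x ∉ l := by
        rw [hmem]
        rintro ⟨k, rfl⟩
        exact hx (Finset.mem_image_of_mem f (Finset.mem_univ k))
      rw [hout x hxl, hdiag]
    rw [h1, Finset.prod_image (fun a _ b _ h => hfinj h)]
    have h2 : ∀ k : Fin m, A (f k) (σ (f k)) = A (q (k : ℕ)) (q ((k : ℕ) + 1)) := by
      intro k; rw [key k]
    rw [Finset.prod_congr rfl fun k _ => h2 k]
    unfold wW
    exact Fin.prod_univ_eq_prod_range (fun t => A (q t) (q (t + 1))) m
  rw [← hprod]
  exact hAone σ

/-- every closed walk has weight `≤ 1` -/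
theorem closed_le_one (hidem : ∀ a : R, a + a = a) (A : Matrix (Fin n) (Fin n) R)
    (hdiag : ∀ c, A c c = 1)
    (hAone : ∀ σ : Equiv.Perm (Fin n), (∏ i, A i (σ i)) + 1 = 1) :
    ∀ (m : ℕ) (q : ℕ → Fin n), q m = q 0 → wW A q m + 1 = 1 := by
  intro m
  induction m using Nat.strong_induction_on with
  | _ m IH =>
    intro q hq
    by_cases hinj : ∀ a b : ℕ, a < b → b ≤ m → q a = q b → a = 0 ∧ b = m
    · -- q is injective on [0, m): simple cycle
      refine cycle_le_one A hdiag hAone m q hq fun k l h => ?_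
      by_contra hne
      rcases Nat.lt_or_ge (k : ℕ) (l : ℕ) with hlt | hge
      · have := hinj k l hlt (le_of_lt l.2) h
        omega
      · have hlt : (l : ℕ) < (k : ℕ) := by
          rcases Nat.lt_or_ge (l : ℕ) (k : ℕ) with h' | h'
          · exact h'
          · exact absurd (Fin.ext (le_antisymm h' hge)) hne
        have := hinj l k hlt (le_of_lt k.2) h.symm
        omega
    · push_neg at hinj
      obtain ⟨a, b, hab, hbm, hqab, hne⟩ := hinj
      have hsplit := wW_split A q hab hbm hqab
      set δ := b - a with hδ
      set g : ℕ → Fin n := fun u => if u < a then q u else q (u + δ) with hg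
      have hinner : wW A (fun v => q (v + a)) δ + 1 = 1 := by
        refine IH δ (by omega) _ ?_
        show q (δ + a) = q (0 + a)
        rw [show δ + a = b by omega, show 0 + a = a by omega, hqab]
      have houter : wW A g (m - δ) + 1 = 1 := by
        refine IH (m - δ) (by omega) _ ?_
        show g (m - δ) = g 0
        rcases Nat.eq_zero_or_pos a with ha0 | hapos
        · have hgu : ∀ u, g u = q (u + δ) := by intro u; simp [hg, ha0]
          rw [hgu, hgu, show m - δ + δ = m by omega, show 0 + δ = b by omega, hq, ← hqab, ha0]
        · have h1 : ¬ (m - δ < a) := by omega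
          simp only [hg, if_neg h1, if_pos hapos]
          rw [show m - δ + δ = m by omega, hq]
      rw [hsplit]
      calc wW A g (m - δ) * wW A (fun v => q (v + a)) δ + 1
          = wW A g (m - δ) * wW A (fun v => q (v + a)) δ + (wW A g (m - δ) * 1 + 1) := by
            rw [mul_one, houter]
        _ = (wW A g (m - δ) * wW A (fun v => q (v + a)) δ + wW A g (m - δ) * 1) + 1 := by
            rw [add_assoc]
        _ = wW A g (m - δ) * 1 + 1 := by rw [tle_mul_left _ hinner]
        _ = 1 := by rw [mul_one, houter]

end Cycles

section Subeig
variable {R : Type*} [CommSemiring R]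

theorem tle_mul_le {b c : R} (h : c + 1 = 1) : b * c + b = b := by
  calc b * c + b = b * (c + 1) := by rw [mul_add, mul_one]
    _ = b := by rw [h, mul_one]

/-- existence of a subeigenvector `x` with `x ≥ 1` and `A x ≤ x` -/
theorem exists_subeig (hidem : ∀ a : R, a + a = a) {n : ℕ}
    (A : Matrix (Fin n) (Fin n) R) (hdiag : ∀ c, A c c = 1)
    (hAone : ∀ σ : Equiv.Perm (Fin n), (∏ i, A i (σ i)) + 1 = 1) :
    ∃ x : Fin n → R, (∀ i, 1 + x i = x i) ∧ (∀ i j, A i j * x j + x i = x i) := by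
  classical
  set L := n + 1 with hL
  set ext : Fin n → (Fin L → Fin n) → ℕ → Fin n :=
    fun i p t => if h : t - 1 < L ∧ t ≠ 0 then p ⟨t - 1, h.1⟩ else i with hext
  have hext0 : ∀ i p, ext i p 0 = i := by intro i p; simp [hext]
  refine ⟨fun i => ∑ p : Fin L → Fin n, wW A (ext i p) L, ?_, ?_⟩
  · intro i
    show (1 : R) + ∑ p : Fin L → Fin n, wW A (ext i p) L =
      ∑ p : Fin L → Fin n, wW A (ext i p) L
    have hconst : wW A (ext i (fun _ => i)) L = 1 := by
      have h1 : wW A (ext i (fun _ => i)) L = wW A (fun _ => i) L :=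
        wW_congr A fun t _ => by simp [hext]
      rw [h1]
      exact Finset.prod_eq_one fun t _ => hdiag i
    rw [← hconst]
    exact tle_le_sum (f := fun p => wW A (ext i p) L) hidem (Finset.mem_univ (fun _ => i))
  · intro i j
    show A i j * ∑ p : Fin L → Fin n, wW A (ext j p) L +
        ∑ p : Fin L → Fin n, wW A (ext i p) L = ∑ p : Fin L → Fin n, wW A (ext i p) L
    rw [Finset.mul_sum]
    refine tle_sum fun p _ => ?_
    set r : ℕ → Fin n := fun t => if t = 0 then i else ext j p (t - 1) with hr
    have hr0 : r 0 = i := by simp [hr]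
    have h1 : A i j * wW A (ext j p) L = wW A r (L + 1) := by
      have hsucc : wW A r (L + 1) = wW A (fun t => r (t + 1)) L * A (r 0) (r 1) :=
        Finset.prod_range_succ' (fun t => A (r t) (r (t + 1))) L
      have e1 : r 1 = j := by simp [hr, hext0]
      have e2 : wW A (fun t => r (t + 1)) L = wW A (ext j p) L :=
        wW_congr A fun t _ => by simp [hr]
      rw [hsucc, hr0, e1, e2, mul_comm]
    obtain ⟨s, t, hst, htL, hrst⟩ : ∃ s t : ℕ, s < t ∧ t ≤ L ∧ r s = r t := by
      obtain ⟨k₁, k₂, hne, heq⟩ :=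
        Fintype.exists_ne_map_eq_of_card_lt (fun k : Fin (L + 1) => r (k : ℕ))
          (by simp only [Fintype.card_fin]; omega)
      have hne' : (k₁ : ℕ) ≠ (k₂ : ℕ) := fun hh => hne (Fin.ext hh)
      rcases Nat.lt_or_ge (k₁ : ℕ) (k₂ : ℕ) with h | h
      · exact ⟨k₁, k₂, h, Nat.lt_succ_iff.mp k₂.2, heq⟩
      · exact ⟨k₂, k₁, by omega, Nat.lt_succ_iff.mp k₁.2, heq.symm⟩
    have hsplit := wW_split A r hst (by omega : t ≤ L + 1) hrst
    set δ := t - s with hδ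
    set m' := L + 1 - δ with hm'
    set g : ℕ → Fin n := fun u => if u < s then r u else r (u + δ) with hgdef
    have hm'L : m' ≤ L := by omega
    have hcyc : wW A (fun v => r (v + s)) δ + 1 = 1 := by
      refine closed_le_one hidem A hdiag hAone δ _ ?_
      show r (δ + s) = r (0 + s)
      rw [show δ + s = t by omega, show 0 + s = s by omega, hrst]
    have hle1 : wW A r (L + 1) + wW A g m' = wW A g m' := by
      rw [hsplit]
      exact tle_mul_le hcyc
    have hg0 : g 0 = i := by
      rcases Nat.eq_zero_or_pos s with hs0 | hs
      · have h0 : ¬ ((0:ℕ) < s) := by omega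
        have hh : g 0 = r (0 + δ) := by simp only [hgdef, h0, if_false]
        rw [hh, show 0 + δ = t by omega, ← hrst, hs0, hr0]
      · have hh : g 0 = r 0 := by simp only [hgdef, if_pos hs]
        rw [hh, hr0]
    set p' : Fin L → Fin n := fun k => g (min ((k : ℕ) + 1) m') with hp'
    have e3 : wW A g m' = wW A (ext i p') L := by
      rw [← wW_pad A hdiag g hm'L]
      refine wW_congr A fun u hu => ?_
      show g (min u m') = ext i p' u
      rcases Nat.eq_zero_or_pos u with hu0 | hupos
      · subst hu0
        rw [hext0, Nat.zero_min, hg0]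
      · have hcond : u - 1 < L ∧ u ≠ 0 := ⟨by omega, by omega⟩
        have hh : ext i p' u = p' ⟨u - 1, hcond.1⟩ := by
          simp only [hext]
          rw [dif_pos hcond]
        rw [hh]
        show g (min u m') = g (min (u - 1 + 1) m')
        rw [show u - 1 + 1 = u by omega]
    have hle2 : wW A g m' + ∑ p : Fin L → Fin n, wW A (ext i p) L =
        ∑ p : Fin L → Fin n, wW A (ext i p) L := by
      rw [e3]
      exact tle_le_sum (f := fun p => wW A (ext i p) L) hidem (Finset.mem_univ p')
    rw [h1]
    exact tle_trans hle1 hle2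

end Subeig


/-- Hungarian scaling: over a totally ordered idempotent semifield `R` (idempotent
addition, total natural order `a ≤ b ↔ a + b = b`, every nonzero element invertible),
any matrix `C` with nonzero permanent admits vectors `u, v` of nonzero elements such
that `C_{ij} ≤ u_i v_j` for all `i, j`, with equality along every optimal permutation,
and `per C = Π_i u_i · Π_j v_j`. -/
theorem stmt8 {R : Type*} [CommSemiring R]
    (hidem : ∀ a : R, a + a = a)
    (htot : ∀ a b : R, a + b = b ∨ a + b = a)
    (hinv : ∀ a : R, a ≠ 0 → IsUnit a)
    (n : ℕ) (C : Matrix (Fin n) (Fin n) R) (hC : perm C ≠ 0) :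
    ∃ u v : Fin n → R, (∀ i, u i ≠ 0) ∧ (∀ j, v j ≠ 0) ∧
      (∀ i j, C i j + u i * v j = u i * v j) ∧
      (∀ σ : Equiv.Perm (Fin n), (∏ i, C i (σ i)) = perm C → ∀ i, C i (σ i) = u i * v (σ i)) ∧
      perm C = (∏ i, u i) * ∏ j, v j := by
  classical
  have h10 : (1 : R) ≠ 0 := by
    intro h
    exact hC (by rw [← mul_one (perm C), h, mul_zero])
  obtain ⟨σ₀, -, hσ₀⟩ := tle_exists_eq_sum htot
    (Finset.univ_nonempty (α := Equiv.Perm (Fin n))) (fun σ => ∏ i, C i (σ i))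
  have hσ₀' : perm C = ∏ k, C k (σ₀ k) := hσ₀
  have hdk : ∀ k, C k (σ₀ k) ≠ 0 := by
    intro k h
    exact hC (by rw [hσ₀']; exact Finset.prod_eq_zero (Finset.mem_univ k) h)
  choose e he using fun k => hinv (C k (σ₀ k)) (hdk k)
  set A : Matrix (Fin n) (Fin n) R := fun i k => C i (σ₀ k) * (↑(e k)⁻¹ : R) with hA
  have hdiag : ∀ c, A c c = 1 := by
    intro c
    show C c (σ₀ c) * (↑(e c)⁻¹ : R) = 1
    rw [← he c, Units.mul_inv]
  have hterm : ∀ σ : Equiv.Perm (Fin n), (∏ i, C i (σ i)) + perm C = perm C := by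
    intro σ
    exact tle_le_sum (f := fun σ' : Equiv.Perm (Fin n) => ∏ i, C i (σ' i)) hidem
      (Finset.mem_univ σ)
  have hE : perm C * ∏ k, (↑(e k)⁻¹ : R) = 1 := by
    rw [hσ₀', ← Finset.prod_mul_distrib]
    refine Finset.prod_eq_one fun k _ => ?_
    rw [← he k, Units.mul_inv]
  have hAone : ∀ σ : Equiv.Perm (Fin n), (∏ i, A i (σ i)) + 1 = 1 := by
    intro σ
    have h1 : (∏ i, A i (σ i)) = (∏ i, C i (σ₀ (σ i))) * ∏ k, (↑(e k)⁻¹ : R) := by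
      calc ∏ i, A i (σ i) = (∏ i, C i (σ₀ (σ i))) * ∏ i, (↑(e (σ i))⁻¹ : R) :=
            Finset.prod_mul_distrib
        _ = (∏ i, C i (σ₀ (σ i))) * ∏ k, (↑(e k)⁻¹ : R) := by
            rw [Equiv.prod_comp σ (fun k => (↑(e k)⁻¹ : R))]
    have h3 : (∏ i, C i (σ₀ (σ i))) + perm C = perm C := hterm (σ₀ * σ)
    calc (∏ i, A i (σ i)) + 1
        = (∏ i, C i (σ₀ (σ i))) * (∏ k, (↑(e k)⁻¹ : R)) +
            perm C * (∏ k, (↑(e k)⁻¹ : R)) := by rw [h1, hE]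
      _ = perm C * (∏ k, (↑(e k)⁻¹ : R)) := tle_mul_right _ h3
      _ = 1 := hE
  obtain ⟨x, hx1, hxstep⟩ := exists_subeig hidem A hdiag hAone
  have hxne : ∀ i, x i ≠ 0 := by
    intro i h
    have h2 := hx1 i
    rw [h, add_zero] at h2
    exact h10 h2
  choose X hX using fun i => hinv (x i) (hxne i)
  have hvunit : ∀ j, IsUnit ((↑(X (σ₀⁻¹ j))⁻¹ : R) * ↑(e (σ₀⁻¹ j))) := fun j =>
    ((X (σ₀⁻¹ j))⁻¹).isUnit.mul (e (σ₀⁻¹ j)).isUnit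
  have hcalc : ∀ (w z : Rˣ), ((↑w : R) * ↑z⁻¹ * ((↑w⁻¹ : R) * ↑z) : R) =
      ((↑w : R) * ↑w⁻¹) * ((↑z⁻¹ : R) * ↑z) := fun w z => by ring
  have main_ineq : ∀ i j, C i j + x i * ((↑(X (σ₀⁻¹ j))⁻¹ : R) * ↑(e (σ₀⁻¹ j))) =
      x i * ((↑(X (σ₀⁻¹ j))⁻¹ : R) * ↑(e (σ₀⁻¹ j))) := by
    intro i j
    set k := σ₀⁻¹ j with hk
    have hjk : σ₀ k = j := Equiv.apply_symm_apply σ₀ j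
    have hmul := tle_mul_right ((↑(X k)⁻¹ : R) * ↑(e k)) (hxstep i k)
    have hAC : A i k * x k * ((↑(X k)⁻¹ : R) * ↑(e k)) = C i j := by
      show C i (σ₀ k) * (↑(e k)⁻¹ : R) * x k * ((↑(X k)⁻¹ : R) * ↑(e k)) = C i j
      rw [hjk, ← hX k]
      calc C i j * (↑(e k)⁻¹ : R) * ↑(X k) * ((↑(X k)⁻¹ : R) * ↑(e k))
          = C i j * ((↑(e k)⁻¹ : R) * ↑(e k)) * ((↑(X k) : R) * (↑(X k)⁻¹ : R)) := by ring
        _ = C i j := by rw [Units.inv_mul, Units.mul_inv, mul_one, mul_one]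
    rw [hAC] at hmul
    rw [← mul_assoc] at hmul
    rw [← mul_assoc]
    exact hmul
  have hprod_v : (∏ j, ((↑(X (σ₀⁻¹ j))⁻¹ : R) * ↑(e (σ₀⁻¹ j)))) =
      ∏ k, ((↑(X k)⁻¹ : R) * ↑(e k)) :=
    Equiv.prod_comp σ₀.symm (fun k => (↑(X k)⁻¹ : R) * ↑(e k))
  have hprod_uv : (∏ i, x i) * ∏ k, ((↑(X k)⁻¹ : R) * ↑(e k)) = perm C := by
    rw [← Finset.prod_mul_distrib]
    rw [Finset.prod_congr rfl fun k _ => show x k * ((↑(X k)⁻¹ : R) * ↑(e k)) = ↑(e k) by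
      rw [← hX k, ← mul_assoc, Units.mul_inv, one_mul]]
    rw [hσ₀']
    exact Finset.prod_congr rfl fun k _ => he k
  refine ⟨fun i => x i, fun j => (↑(X (σ₀⁻¹ j))⁻¹ : R) * ↑(e (σ₀⁻¹ j)), fun i => hxne i,
    ?_, fun i j => main_ineq i j, ?_, ?_⟩
  · intro j h
    apply h10
    calc (1 : R) = (↑(X (σ₀⁻¹ j)) : R) * ↑(e (σ₀⁻¹ j))⁻¹ *
          ((↑(X (σ₀⁻¹ j))⁻¹ : R) * ↑(e (σ₀⁻¹ j))) := by
          rw [hcalc, Units.mul_inv, Units.inv_mul, one_mul]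
      _ = 0 := by rw [show ((↑(X (σ₀⁻¹ j))⁻¹ : R) * ↑(e (σ₀⁻¹ j))) = 0 from h, mul_zero]
  · intro σ hopt i
    have hprodeq : (∏ i, C i (σ i)) =
        ∏ i, (x i * ((↑(X (σ₀⁻¹ (σ i)))⁻¹ : R) * ↑(e (σ₀⁻¹ (σ i))))) := by
      rw [hopt, Finset.prod_mul_distrib,
        Equiv.prod_comp σ (fun j => ((↑(X (σ₀⁻¹ j))⁻¹ : R) * ↑(e (σ₀⁻¹ j)))),
        hprod_v, hprod_uv]
    exact tle_prod_eq hidem (f := fun i => C i (σ i))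
      (g := fun i => x i * ((↑(X (σ₀⁻¹ (σ i)))⁻¹ : R) * ↑(e (σ₀⁻¹ (σ i)))))
      (fun i _ => main_ineq i (σ i)) hprodeq
      (fun i _ => (((hX i) ▸ (X i).isUnit).mul (hvunit (σ i)) : IsUnit _))
      i (Finset.mem_univ i)
  · show perm C = (∏ i, x i) * ∏ j, ((↑(X (σ₀⁻¹ j))⁻¹ : R) * ↑(e (σ₀⁻¹ j)))
    rw [hprod_v, hprod_uv]
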